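/- Let m be a real number and let H, D : (0,1) → ℝ with H(r) > 0 and D(r) ≥ 0 for all r, H differentiable on (0,1) with H'(r) = ((m−1)/r)·H(r) + 2·D(r) for all r ∈ (0,1), and set I(r) := r·D(r)/H(r). Assume I is nondecreasing on (0,1). Then for all 0 < r ≤ t < 1 with I(t) > 0: (I(r)/I(t)) · (r/t)^{2I(t)} · D(t)/t^{m−2} ≤ D(r)/r^{m−2} ≤ (r/t)^{2I(r)} · D(t)/t^{m−2}. -/

import Mathlib

/-- Energy comparison from frequency monotonicity: if `H > 0`, `D ≥ 0`,
`H' = ((m-1)/r)H + 2D` on `(0,1)` and the frequency `I(r) = r·D(r)/H(r)` is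
nondecreasing, then for `0 < r ≤ t < 1` with `I(t) > 0`,
`(I(r)/I(t)) (r/t)^{2I(t)} D(t)/t^{m-2} ≤ D(r)/r^{m-2} ≤ (r/t)^{2I(r)} D(t)/t^{m-2}`. -/
theorem dirichlet_energy_comparison (m : ℝ) (H D : ℝ → ℝ)
    (hH : ∀ r ∈ Set.Ioo (0 : ℝ) 1, 0 < H r)
    (hD : ∀ r ∈ Set.Ioo (0 : ℝ) 1, 0 ≤ D r)
    (hH' : ∀ r ∈ Set.Ioo (0 : ℝ) 1, HasDerivAt H ((m - 1) / r * H r + 2 * D r) r)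
    (I : ℝ → ℝ) (hI : ∀ r, I r = r * D r / H r)
    (hmono : MonotoneOn I (Set.Ioo 0 1)) :
    ∀ r t : ℝ, 0 < r → r ≤ t → t < 1 → 0 < I t →
      (I r / I t) * (r / t) ^ (2 * I t) * (D t / t ^ (m - 2)) ≤ D r / r ^ (m - 2) ∧
      D r / r ^ (m - 2) ≤ (r / t) ^ (2 * I r) * (D t / t ^ (m - 2)) := by
  intro r t hr hrt ht1 hIt
  have ht0 : 0 < t := lt_of_lt_of_le hr hrt
  have hr1 : r < 1 := lt_of_le_of_lt hrt ht1
  have hrmem : r ∈ Set.Ioo (0 : ℝ) 1 := ⟨hr, hr1⟩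
  have htmem : t ∈ Set.Ioo (0 : ℝ) 1 := ⟨ht0, ht1⟩
  have hsub : Set.Icc r t ⊆ Set.Ioo (0 : ℝ) 1 := fun s hs =>
    ⟨lt_of_lt_of_le hr hs.1, lt_of_le_of_lt hs.2 ht1⟩
  set F : ℝ → ℝ → ℝ := fun c s => Real.log (H s) - (m - 1 + c) * Real.log s with hF
  -- derivative computation
  have hderiv : ∀ c, ∀ s ∈ Set.Ioo (0 : ℝ) 1, HasDerivAt (F c) ((2 * I s - c) / s) s := by
    intro c s hs
    have hs0 : 0 < s := hs.1
    have hHs : 0 < H s := hH s hs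
    have h1 : HasDerivAt (fun x => Real.log (H x))
        (((m - 1) / s * H s + 2 * D s) / H s) s := (hH' s hs).log hHs.ne'
    have h2 : HasDerivAt (fun x => (m - 1 + c) * Real.log x) ((m - 1 + c) * s⁻¹) s :=
      (Real.hasDerivAt_log hs0.ne').const_mul _
    have h3 := h1.sub h2
    refine h3.congr_deriv ?_
    rw [hI s]
    field_simp
    ring
  -- monotonicity principles
  have key_mono : ∀ c, (∀ s ∈ Set.Icc r t, 0 ≤ 2 * I s - c) → F c r ≤ F c t := by
    intro c hc
    have hmonF : MonotoneOn (F c) (Set.Icc r t) := by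
      apply monotoneOn_of_hasDerivWithinAt_nonneg (f' := fun s => (2 * I s - c) / s)
        (convex_Icc r t)
      · intro s hs
        exact ((hderiv c s (hsub hs)).continuousAt).continuousWithinAt
      · intro s hs
        rw [interior_Icc] at hs
        exact ((hderiv c s (hsub (Set.Ioo_subset_Icc_self hs))).hasDerivWithinAt)
      · intro s hs
        rw [interior_Icc] at hs
        have hs' := Set.Ioo_subset_Icc_self hs
        exact div_nonneg (hc s hs') (le_of_lt (lt_of_lt_of_le hr hs'.1))
    exact hmonF ⟨le_refl r, hrt⟩ ⟨hrt, le_refl t⟩ hrt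
  have key_anti : ∀ c, (∀ s ∈ Set.Icc r t, 2 * I s - c ≤ 0) → F c t ≤ F c r := by
    intro c hc
    have hantF : AntitoneOn (F c) (Set.Icc r t) := by
      apply antitoneOn_of_hasDerivWithinAt_nonpos (f' := fun s => (2 * I s - c) / s)
        (convex_Icc r t)
      · intro s hs
        exact ((hderiv c s (hsub hs)).continuousAt).continuousWithinAt
      · intro s hs
        rw [interior_Icc] at hs
        exact ((hderiv c s (hsub (Set.Ioo_subset_Icc_self hs))).hasDerivWithinAt)
      · intro s hs
        rw [interior_Icc] at hs
        have hs' := Set.Ioo_subset_Icc_self hs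
        exact div_nonpos_of_nonpos_of_nonneg (hc s hs') (le_of_lt (lt_of_lt_of_le hr hs'.1))
    exact hantF ⟨le_refl r, hrt⟩ ⟨hrt, le_refl t⟩ hrt
  -- basic positivity
  have hHr : 0 < H r := hH r hrmem
  have hHt : 0 < H t := hH t htmem
  have hIr0 : 0 ≤ I r := by
    rw [hI r]; exact div_nonneg (mul_nonneg hr.le (hD r hrmem)) hHr.le
  have hIrt : I r ≤ I t := hmono hrmem htmem hrt
  set a : ℝ := 2 * I r with ha
  set b : ℝ := 2 * I t with hb
  set p : ℝ := r / t with hpdef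
  have hp : 0 < p := div_pos hr ht0
  have hFa : F a r ≤ F a t := key_mono a (fun s hs => by
    have : I r ≤ I s := hmono hrmem (hsub hs) hs.1
    simp only [ha]; linarith)
  have hFb : F b t ≤ F b r := key_anti b (fun s hs => by
    have : I s ≤ I t := hmono (hsub hs) htmem hs.2
    simp only [hb]; linarith)
  -- convert to H bounds
  have hlogup : Real.log (H r) ≤ Real.log (H t * p ^ (m - 1 + a)) := by
    rw [Real.log_mul hHt.ne' (Real.rpow_pos_of_pos hp _).ne', Real.log_rpow hp,
      hpdef, Real.log_div hr.ne' ht0.ne']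
    have h1 : Real.log (H r) - (m - 1 + a) * Real.log r ≤
        Real.log (H t) - (m - 1 + a) * Real.log t := hFa
    nlinarith [h1]
  have hlogdown : Real.log (H t * p ^ (m - 1 + b)) ≤ Real.log (H r) := by
    rw [Real.log_mul hHt.ne' (Real.rpow_pos_of_pos hp _).ne', Real.log_rpow hp,
      hpdef, Real.log_div hr.ne' ht0.ne']
    have h1 : Real.log (H t) - (m - 1 + b) * Real.log t ≤
        Real.log (H r) - (m - 1 + b) * Real.log r := hFb
    nlinarith [h1]
  have hup : H r ≤ H t * p ^ (m - 1 + a) :=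
    (Real.log_le_log_iff hHr (mul_pos hHt (Real.rpow_pos_of_pos hp _))).mp hlogup
  have hlo : H t * p ^ (m - 1 + b) ≤ H r :=
    (Real.log_le_log_iff (mul_pos hHt (Real.rpow_pos_of_pos hp _)) hHr).mp hlogdown
  -- split rpow
  have hsplit : ∀ c : ℝ, p ^ (m - 1 + c) = r ^ (m - 1) / t ^ (m - 1) * p ^ c := by
    intro c
    rw [Real.rpow_add hp, hpdef, Real.div_rpow hr.le ht0.le]
  rw [hsplit] at hup hlo
  -- rewrite D / r^(m-2) as I * H / r^(m-1)
  have hDr : D r = I r * H r / r := by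
    rw [hI r]; field_simp
  have hDt : D t = I t * H t / t := by
    rw [hI t]; field_simp
  have hrm : r ^ (m - 1) = r ^ (m - 2) * r := by
    rw [show m - 1 = m - 2 + 1 by ring, Real.rpow_add hr, Real.rpow_one]
  have htm : t ^ (m - 1) = t ^ (m - 2) * t := by
    rw [show m - 1 = m - 2 + 1 by ring, Real.rpow_add ht0, Real.rpow_one]
  have hR : 0 < r ^ (m - 1) := Real.rpow_pos_of_pos hr _
  have hT : 0 < t ^ (m - 1) := Real.rpow_pos_of_pos ht0 _
  have hR2 : 0 < r ^ (m - 2) := Real.rpow_pos_of_pos hr _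
  have hT2 : 0 < t ^ (m - 2) := Real.rpow_pos_of_pos ht0 _
  have e1 : D r / r ^ (m - 2) = I r * H r / r ^ (m - 1) := by
    rw [hDr, hrm, div_div, mul_comm (r ^ (m - 2)) r]
  have e2 : D t / t ^ (m - 2) = I t * H t / t ^ (m - 1) := by
    rw [hDt, htm, div_div, mul_comm (t ^ (m - 2)) t]
  set R : ℝ := r ^ (m - 1)
  set T : ℝ := t ^ (m - 1)
  have hpa : 0 < p ^ a := Real.rpow_pos_of_pos hp _
  have hpb : 0 < p ^ b := Real.rpow_pos_of_pos hp _
  have hup' : H r * T ≤ H t * R * p ^ a := by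
    have := mul_le_mul_of_nonneg_right hup hT.le
    calc H r * T ≤ H t * (R / T * p ^ a) * T := this
      _ = H t * R * p ^ a := by field_simp
  have hlo' : H t * R * p ^ b ≤ H r * T := by
    have := mul_le_mul_of_nonneg_right hlo hT.le
    calc H t * R * p ^ b = H t * (R / T * p ^ b) * T := by field_simp
      _ ≤ H r * T := this
  constructor
  · -- lower bound
    rw [e1]
    have lhs_eq : I r / I t * p ^ b * (D t / t ^ (m - 2)) = I r * (H t * p ^ b) / T := by
      rw [e2]; field_simp
    rw [lhs_eq, div_le_div_iff₀ hT hR]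
    have s1 : I r * (H t * R * p ^ b) ≤ I r * (H r * T) :=
      mul_le_mul_of_nonneg_left hlo' hIr0
    calc I r * (H t * p ^ b) * R = I r * (H t * R * p ^ b) := by ring
      _ ≤ I r * (H r * T) := s1
      _ = I r * H r * T := by ring
  · -- upper bound
    rw [e1, e2, ← mul_div_assoc, div_le_div_iff₀ hR hT]
    have s1 : I r * (H r * T) ≤ I r * (H t * R * p ^ a) :=
      mul_le_mul_of_nonneg_left hup' hIr0
    have s2 : I r * (H t * R * p ^ a) ≤ I t * (H t * R * p ^ a) :=
      mul_le_mul_of_nonneg_right hIrt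
        (mul_nonneg (mul_nonneg hHt.le hR.le) hpa.le)
    calc I r * H r * T = I r * (H r * T) := by ring
      _ ≤ I r * (H t * R * p ^ a) := s1
      _ ≤ I t * (H t * R * p ^ a) := s2
      _ = p ^ a * (I t * H t) * R := by ring
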